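/- Let (X, ≼, △) be a linearly ordered semigroup and k ∈ ℕ with k ≥ 1. On the set M^k(X) of finite multisets over X of cardinality at most k, define M₁ ▽^k M₂ = min^k(M₁ ⊎ M₂) and M₁ ▵^k M₂ = min^k({{x₁ △ x₂ | x₁ ∈ M₁, x₂ ∈ M₂}}). Then ▽^k and ▵^k are commutative and associative, and ▵^k distributes over ▽^k. -/

import Mathlib

/-- The multiset of the `k` smallest elements of `M` (all of `M` if `|M| ≤ k`). -/
def minK {X : Type*} [LinearOrder X] (k : ℕ) (M : Multiset X) : Multiset X :=
  ((M.sort (· ≤ ·)).take k : List X)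

/-- `M₁ ▽^k M₂ = min^k (M₁ ⊎ M₂)`. -/
def orK {X : Type*} [LinearOrder X] (k : ℕ) (M₁ M₂ : Multiset X) : Multiset X :=
  minK k (M₁ + M₂)

/-- `M₁ ▵^k M₂ = min^k {{x₁ △ x₂ | x₁ ∈ M₁, x₂ ∈ M₂}}`. -/
def andK {X : Type*} [LinearOrder X] (op : X → X → X) (k : ℕ)
    (M₁ M₂ : Multiset X) : Multiset X :=
  minK k (M₁.bind fun x₁ => M₂.map (op x₁))

namespace TopKAux

variable {X : Type*} [LinearOrder X]

lemma list_take_countP (p : X → Bool) (hp : ∀ x y, x ≤ y → p y = true → p x = true) :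
    ∀ (l : List X), l.Pairwise (· ≤ ·) → ∀ k, (l.take k).countP p = min (l.countP p) k := by
  intro l
  induction l with
  | nil => intro _ k; simp
  | cons a l ih =>
    intro hs k
    cases k with
    | zero => simp
    | succ k =>
      have hs' : l.Pairwise (· ≤ ·) := hs.of_cons
      have ihk := ih hs' k
      by_cases hpa : p a = true
      · simp [List.countP_cons, hpa, ihk]
      · have h0 : l.countP p = 0 := by
          rw [List.countP_eq_zero]
          intro x hx hpx
          exact hpa (hp a x (List.rel_of_pairwise_cons hs hx) hpx)
        simp [List.countP_cons, hpa, ihk, h0]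

lemma minK_countP (k : ℕ) (M : Multiset X) (p : X → Prop) [DecidablePred p]
    (hp : ∀ x y, x ≤ y → p y → p x) :
    (minK k M).countP p = min (M.countP p) k := by
  have hs := Multiset.pairwise_sort M (· ≤ ·)
  unfold minK
  rw [Multiset.coe_countP]
  conv_rhs => rw [← Multiset.sort_eq M (· ≤ ·), Multiset.coe_countP]
  exact list_take_countP _ (fun x y hxy hy => by
    simp only [decide_eq_true_eq] at *; exact hp x y hxy hy) _ hs k

lemma countP_le_split (A : Multiset X) (x : X) :
    A.countP (· ≤ x) = A.countP (· < x) + A.count x := by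
  induction A using Multiset.induction with
  | empty => simp
  | cons a s ih =>
    rw [Multiset.countP_cons, Multiset.countP_cons, Multiset.count_cons, ih]
    rcases lt_trichotomy a x with h | h | h
    · simp only [le_of_lt h, if_true, h, h.ne', if_false]
      omega
    · simp only [h, le_refl, if_true, lt_irrefl, if_false]
      omega
    · simp only [not_le.mpr h, not_lt.mpr h.le, h.ne, if_false]
      omega

lemma ext_of_countP {A B : Multiset X}
    (hle : ∀ t, A.countP (· ≤ t) = B.countP (· ≤ t))
    (hlt : ∀ t, A.countP (· < t) = B.countP (· < t)) : A = B := by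
  ext x
  have h1 := countP_le_split A x
  have h2 := countP_le_split B x
  have := hle x
  have := hlt x
  omega

lemma countP_mono_pred {A : Multiset X} {p q : X → Prop} [DecidablePred p] [DecidablePred q]
    (h : ∀ x ∈ A, p x → q x) : A.countP p ≤ A.countP q := by
  induction A using Multiset.induction with
  | empty => simp
  | cons a s ih =>
    rw [Multiset.countP_cons, Multiset.countP_cons]
    have := h a (Multiset.mem_cons_self a s)
    have := ih (fun x hx => h x (Multiset.mem_cons_of_mem hx))
    by_cases hp : p a
    · simp [hp, h a (Multiset.mem_cons_self a s) hp]; omega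
    · simp [hp]; omega

/-- Key lemma 1: collapsing an inner `minK` on the left of `+`. -/
lemma minK_add_left (k : ℕ) (M N : Multiset X) :
    minK k (minK k M + N) = minK k (M + N) := by
  apply ext_of_countP <;> intro t
  · rw [minK_countP _ _ _ (fun x y hxy hy => le_trans hxy hy),
      minK_countP _ _ _ (fun x y hxy hy => le_trans hxy hy),
      Multiset.countP_add, Multiset.countP_add,
      minK_countP _ _ _ (fun x y hxy hy => le_trans hxy hy)]
    omega
  · rw [minK_countP _ _ _ (fun x y hxy hy => lt_of_le_of_lt hxy hy),
      minK_countP _ _ _ (fun x y hxy hy => lt_of_le_of_lt hxy hy),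
      Multiset.countP_add, Multiset.countP_add,
      minK_countP _ _ _ (fun x y hxy hy => lt_of_le_of_lt hxy hy)]
    omega

lemma minK_add_right (k : ℕ) (M N : Multiset X) :
    minK k (M + minK k N) = minK k (M + N) := by
  rw [add_comm M, add_comm M, minK_add_left]

/-- Key lemma 2: a part all of whose elements dominate `k` elements of `A` can be dropped. -/
lemma minK_add_absorb (k : ℕ) (A B : Multiset X)
    (h : ∀ b ∈ B, k ≤ A.countP (· ≤ b)) :
    minK k (A + B) = minK k A := by
  apply ext_of_countP <;> intro t
  · rw [minK_countP _ _ _ (fun x y hxy hy => le_trans hxy hy),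
      minK_countP _ _ _ (fun x y hxy hy => le_trans hxy hy), Multiset.countP_add]
    rcases Nat.eq_zero_or_pos (B.countP (· ≤ t)) with h0 | hpos
    · omega
    · obtain ⟨b, hb, hbt⟩ := Multiset.countP_pos.mp hpos
      have : A.countP (· ≤ b) ≤ A.countP (· ≤ t) :=
        countP_mono_pred (fun x _ hx => le_trans hx hbt)
      have := h b hb
      omega
  · rw [minK_countP _ _ _ (fun x y hxy hy => lt_of_le_of_lt hxy hy),
      minK_countP _ _ _ (fun x y hxy hy => lt_of_le_of_lt hxy hy), Multiset.countP_add]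
    rcases Nat.eq_zero_or_pos (B.countP (· < t)) with h0 | hpos
    · omega
    · obtain ⟨b, hb, hbt⟩ := Multiset.countP_pos.mp hpos
      have : A.countP (· ≤ b) ≤ A.countP (· < t) :=
        countP_mono_pred (fun x _ hx => lt_of_le_of_lt hx hbt)
      have := h b hb
      omega

lemma bind_mono {s : Multiset X} {f g : X → Multiset X} (h : ∀ x ∈ s, f x ≤ g x) :
    s.bind f ≤ s.bind g := by
  induction s using Multiset.induction with
  | empty => simp
  | cons a s ih =>
    rw [Multiset.cons_bind, Multiset.cons_bind]
    exact add_le_add (h a (Multiset.mem_cons_self a s))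
      (ih (fun x hx => h x (Multiset.mem_cons_of_mem hx)))

/-- Key lemma 3: collapsing an inner `minK` under a monotone bind-map. -/
lemma minK_bind_absorb (k : ℕ) (S M : Multiset X) (F : X → X → X)
    (hF : ∀ m x y, x ≤ y → F x m ≤ F y m) :
    minK k ((minK k S).bind fun s => M.map (F s))
      = minK k (S.bind fun s => M.map (F s)) := by
  set f : X → Multiset X := fun s => M.map (F s) with hf
  have hsort := Multiset.pairwise_sort S (· ≤ ·)
  set l := S.sort (· ≤ ·) with hl
  have hS : S = (↑(l.take k) : Multiset X) + ↑(l.drop k) := by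
    rw [Multiset.coe_add, List.take_append_drop]
    exact (Multiset.sort_eq S _).symm
  have hminK : minK k S = (↑(l.take k) : Multiset X) := rfl
  rw [hminK]
  conv_rhs => rw [hS, Multiset.add_bind]
  rw [minK_add_absorb]
  intro b hb
  rw [Multiset.mem_bind] at hb
  obtain ⟨d, hd, hbd⟩ := hb
  rw [hf] at hbd
  simp only [Multiset.mem_map] at hbd
  obtain ⟨m, hm, rfl⟩ := hbd
  rw [Multiset.mem_coe] at hd
  -- since drop is nonempty, take has exactly k elements
  have hlen : (l.take k).length = k := by
    have hkl : k ≤ l.length := by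
      by_contra hcon
      rw [List.drop_eq_nil_of_le (le_of_not_ge hcon)] at hd
      exact absurd hd (List.not_mem_nil (a := d))
    simp [hkl]
  -- every element of take is ≤ d
  have htd : ∀ x ∈ l.take k, x ≤ d := by
    have hpw : List.Pairwise (· ≤ ·) (l.take k ++ l.drop k) := by
      rw [List.take_append_drop]; exact hsort
    rw [List.pairwise_append] at hpw
    exact fun x hx => hpw.2.2 x hx d hd
  -- the candidate submultiset
  have hsub : ((↑(l.take k) : Multiset X).map fun x => F x m)
      ≤ (↑(l.take k) : Multiset X).bind f := by
    rw [← Multiset.bind_singleton]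
    apply bind_mono
    intro x _
    rw [Multiset.singleton_le, hf]
    exact Multiset.mem_map_of_mem _ hm
  calc k = Multiset.card ((↑(l.take k) : Multiset X).map fun x => F x m) := by
        rw [Multiset.card_map, Multiset.coe_card, hlen]
    _ = ((↑(l.take k) : Multiset X).map fun x => F x m).countP (· ≤ F d m) := by
        rw [Multiset.countP_eq_card.mpr]
        intro a ha
        rw [Multiset.mem_map] at ha
        obtain ⟨x, hx, rfl⟩ := ha
        exact hF m x d (htd x (Multiset.mem_coe.mp hx))
    _ ≤ ((↑(l.take k) : Multiset X).bind f).countP (· ≤ F d m) :=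
        Multiset.countP_le_of_le _ hsub

end TopKAux

open TopKAux in
theorem topk_semiring {X : Type*} [LinearOrder X] (op : X → X → X)
    (hcomm : ∀ x y, op x y = op y x)
    (hassoc : ∀ x y z, op (op x y) z = op x (op y z))
    (hmono : ∀ x y z, x ≤ y → op x z ≤ op y z)
    (k : ℕ) (hk : 1 ≤ k)
    (M₁ M₂ M₃ : Multiset X)
    (h₁ : Multiset.card M₁ ≤ k) (h₂ : Multiset.card M₂ ≤ k)
    (h₃ : Multiset.card M₃ ≤ k) :
    (orK k M₁ M₂ = orK k M₂ M₁) ∧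
    (orK k (orK k M₁ M₂) M₃ = orK k M₁ (orK k M₂ M₃)) ∧
    (andK op k M₁ M₂ = andK op k M₂ M₁) ∧
    (andK op k (andK op k M₁ M₂) M₃ = andK op k M₁ (andK op k M₂ M₃)) ∧
    (andK op k M₁ (orK k M₂ M₃) = orK k (andK op k M₁ M₂) (andK op k M₁ M₃)) := by
  -- the bind-swap lemma
  have swap : ∀ (A B : Multiset X),
      (A.bind fun x => B.map (op x)) = B.bind fun b => A.map fun x => op x b := by
    intro A B
    calc A.bind (fun x => B.map (op x))
        = A.bind (fun x => B.bind fun b => ({op x b} : Multiset X)) := by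
          simp [Multiset.bind_singleton]
      _ = B.bind (fun b => A.bind fun x => ({op x b} : Multiset X)) := Multiset.bind_bind A B
      _ = B.bind (fun b => A.map fun x => op x b) := by
          simp [Multiset.bind_singleton]
  have hmono' : ∀ m x y : X, x ≤ y → op m x ≤ op m y := by
    intro m x y hxy
    rw [hcomm m x, hcomm m y]
    exact hmono x y m hxy
  refine ⟨?_, ?_, ?_, ?_, ?_⟩
  · unfold orK; rw [add_comm]
  · unfold orK
    rw [minK_add_left, minK_add_right, add_assoc]
  · unfold andK
    rw [swap M₁ M₂]
    congr 1
    apply Multiset.bind_congr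
    intro b _
    apply Multiset.map_congr rfl
    intro x _
    exact hcomm x b
  · unfold andK
    -- rearrangement of the full triple bind
    have R : ((M₁.bind fun x => M₂.map (op x)).bind fun s => M₃.map (op s))
        = M₁.bind fun x => (M₂.bind fun y => M₃.map (op y)).map (op x) := by
      simp only [Multiset.bind_assoc, Multiset.bind_map, Multiset.map_bind,
        Multiset.map_map, Function.comp, hassoc]
    -- left side: collapse outer inner minK
    rw [minK_bind_absorb k (M₁.bind fun x => M₂.map (op x)) M₃ op
      (fun m x y hxy => hmono x y m hxy)]
    rw [R]
    -- right side
    rw [swap M₁ (minK k (M₂.bind fun y => M₃.map (op y))), swap M₁ (M₂.bind fun y => M₃.map (op y))]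
    rw [minK_bind_absorb k (M₂.bind fun y => M₃.map (op y)) M₁ (fun b x => op x b)
      (fun m x y hxy => hmono' m x y hxy)]
  · unfold andK orK
    rw [swap M₁ (minK k (M₂ + M₃))]
    rw [minK_bind_absorb k (M₂ + M₃) M₁ (fun b x => op x b)
      (fun m x y hxy => hmono' m x y hxy)]
    rw [← swap M₁ (M₂ + M₃)]
    rw [minK_add_left, minK_add_right]
    congr 1
    rw [← Multiset.bind_add]
    apply Multiset.bind_congr
    intro x _
    rw [Multiset.map_add]
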